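/- (continuity of the piecewise Lyapunov function in Theorem 3.5) Let P_1, P_2 ∈ ℝ^{n×n} be symmetric, b_1, b_2 ∈ ℝⁿ and ẽ_1, ẽ_2 ∈ ℝ, and suppose condition (15) holds: Tᵀ [[P_1 − P_2, b_1 − b_2],[(b_1 − b_2)ᵀ, ẽ_1 − ẽ_2]] T = 0, where T is the (n+1)×(2n−1) matrix whose columns are (r_0;1) and the columns of (R̂;0) and (−R̂;0). Then the function V(x) = xᵀP_1x + 2b_1ᵀx + ẽ_1 for cᵀx + f < 0, V(x) = xᵀP_2x + 2b_2ᵀx + ẽ_2 for cᵀx + f ≥ 0, is continuous on ℝⁿ. -/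

import Mathlib

open Matrix

noncomputable section

/-- The n×(n−1) matrix R̂ (state dimension is `n+1`, so R̂ has `n` columns):
first row `(−c₂/c₁, …, −c_n/c₁)`, lower block the identity. -/
def Rhat {n : ℕ} (c : Fin (n+1) → ℝ) : Matrix (Fin (n+1)) (Fin n) ℝ :=
  Matrix.of fun i j =>
    Fin.cases (motive := fun _ => ℝ) (-(c j.succ) / c 0)
      (fun k => if k = j then (1:ℝ) else 0) i

/-- The vector `r₀ = (−f/c₁, 0, …, 0)ᵀ`. -/
def rZero {n : ℕ} (c : Fin (n+1) → ℝ) (f : ℝ) : Fin (n+1) → ℝ :=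
  fun i => if i = 0 then -f / c 0 else 0

/-- The symmetric block matrix `[[P, b],[bᵀ, e]]`. -/
def quadMat {N : Type*} (P : Matrix N N ℝ) (b : N → ℝ) (e : ℝ) :
    Matrix (N ⊕ Unit) (N ⊕ Unit) ℝ :=
  Matrix.fromBlocks P (Matrix.of fun i _ => b i) (Matrix.of fun _ j => b j)
    (Matrix.of fun _ _ => e)

/-- The (n+1)×(2n) matrix with columns `(r₀;1)`, `(u;0)`, the columns of `(R̂;0)`
and the columns of `(−R̂;0)`. -/
def Smat {n : ℕ} (c : Fin (n+1) → ℝ) (f : ℝ) (u : Fin (n+1) → ℝ) :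
    Matrix (Fin (n+1) ⊕ Unit) (Unit ⊕ Unit ⊕ Fin n ⊕ Fin n) ℝ :=
  Matrix.of fun i j =>
    match j with
    | Sum.inl _ => Sum.elim (rZero c f) (fun _ => (1:ℝ)) i
    | Sum.inr (Sum.inl _) => Sum.elim u (fun _ => (0:ℝ)) i
    | Sum.inr (Sum.inr (Sum.inl k)) => Sum.elim (fun i' => Rhat c i' k) (fun _ => (0:ℝ)) i
    | Sum.inr (Sum.inr (Sum.inr k)) => Sum.elim (fun i' => -Rhat c i' k) (fun _ => (0:ℝ)) i

/-- The (n+1)×(2n−1) matrix with columns `(r₀;1)`, the columns of `(R̂;0)`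
and the columns of `(−R̂;0)`. -/
def Tmat {n : ℕ} (c : Fin (n+1) → ℝ) (f : ℝ) :
    Matrix (Fin (n+1) ⊕ Unit) (Unit ⊕ Fin n ⊕ Fin n) ℝ :=
  Matrix.of fun i j =>
    match j with
    | Sum.inl _ => Sum.elim (rZero c f) (fun _ => (1:ℝ)) i
    | Sum.inr (Sum.inl k) => Sum.elim (fun i' => Rhat c i' k) (fun _ => (0:ℝ)) i
    | Sum.inr (Sum.inr k) => Sum.elim (fun i' => -Rhat c i' k) (fun _ => (0:ℝ)) i

/-- `Q >_{ℝ₊^ι} 0` : `zᵀ Q z > 0` for every nonzero entrywise-nonnegative `z`. -/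
def PosOnNonnegOrthant {ι : Type*} [Fintype ι] (Q : Matrix ι ι ℝ) : Prop :=
  ∀ z : ι → ℝ, (∀ j, 0 ≤ z j) → z ≠ 0 → 0 < z ⬝ᵥ Q *ᵥ z


theorem piecewise_lyapunov_continuous
    (n : ℕ) (c : Fin (n+1) → ℝ) (hc : c 0 ≠ 0) (f : ℝ)
    (P₁ P₂ : Matrix (Fin (n+1)) (Fin (n+1)) ℝ) (hP₁ : P₁.IsSymm) (hP₂ : P₂.IsSymm)
    (b₁ b₂ : Fin (n+1) → ℝ) (e₁ e₂ : ℝ)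
    (h15 : (Tmat c f)ᵀ * quadMat (P₁ - P₂) (b₁ - b₂) (e₁ - e₂) * Tmat c f = 0)
    (V : (Fin (n+1) → ℝ) → ℝ)
    (hV : ∀ x, V x = if c ⬝ᵥ x + f < 0 then x ⬝ᵥ P₁ *ᵥ x + 2 * (b₁ ⬝ᵥ x) + e₁
      else x ⬝ᵥ P₂ *ᵥ x + 2 * (b₂ ⬝ᵥ x) + e₂) :
    Continuous V := by
  -- quadratic functions are continuous
  have hquad : ∀ (P : Matrix (Fin (n+1)) (Fin (n+1)) ℝ) (b : Fin (n+1) → ℝ) (e : ℝ),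
      Continuous fun x : Fin (n+1) → ℝ => x ⬝ᵥ P *ᵥ x + 2 * (b ⬝ᵥ x) + e := by
    intro P b e
    simp only [dotProduct, mulVec]
    refine ((Continuous.add ?_ ?_).add continuous_const)
    · exact continuous_finset_sum _ fun i _ => (continuous_apply i).mul
        (continuous_finset_sum _ fun j _ => continuous_const.mul (continuous_apply j))
    · exact continuous_const.mul (continuous_finset_sum _ fun i _ =>
        continuous_const.mul (continuous_apply i))
  have hg : Continuous fun x : Fin (n+1) → ℝ => c ⬝ᵥ x + f := by
    simp only [dotProduct]
    exact (continuous_finset_sum _ fun i _ =>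
      continuous_const.mul (continuous_apply i)).add continuous_const
  -- key: the two quadratics agree on the hyperplane
  have key : ∀ x : Fin (n+1) → ℝ, c ⬝ᵥ x + f = 0 →
      x ⬝ᵥ P₁ *ᵥ x + 2 * (b₁ ⬝ᵥ x) + e₁ = x ⬝ᵥ P₂ *ᵥ x + 2 * (b₂ ⬝ᵥ x) + e₂ := by
    intro x hx
    set w : (Unit ⊕ Fin n ⊕ Fin n) → ℝ :=
      Sum.elim (fun _ => 1) (Sum.elim (fun k => x k.succ) (fun _ => 0)) with hw
    have hz : Tmat c f *ᵥ w = Sum.elim x (fun _ => (1:ℝ)) := by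
      funext i
      cases i with
      | inr u =>
        simp [mulVec, dotProduct, Tmat, hw, Fintype.sum_sum_type]
      | inl i' =>
        induction i' using Fin.cases with
        | zero =>
          have hx0 : c 0 * x 0 = -f - ∑ k : Fin n, c k.succ * x k.succ := by
            have := hx
            rw [dotProduct, Fin.sum_univ_succ] at this
            linarith
          simp only [mulVec, dotProduct, Fintype.sum_sum_type, hw, Tmat, Matrix.of_apply,
            Sum.elim_inl, Sum.elim_inr, rZero, Rhat, Fin.cases_zero, if_pos rfl,
            mul_one, mul_zero, Finset.sum_const_zero, add_zero,
            Finset.univ_unique, Finset.sum_singleton]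
          have hrw : ∀ k : Fin n, -c k.succ / c 0 * x k.succ = -(c k.succ * x k.succ) / c 0 := by
            intro k; ring
          simp only [hrw, ← Finset.sum_div, if_true]
          rw [← add_div, Finset.sum_neg_distrib, div_eq_iff hc]
          linarith [mul_comm (x 0) (c 0)]
        | succ i' =>
          simp only [mulVec, dotProduct, Fintype.sum_sum_type, hw, Tmat, Matrix.of_apply,
            Sum.elim_inl, Sum.elim_inr, rZero, Rhat, Fin.cases_succ,
            mul_one, mul_zero, Finset.sum_const_zero, add_zero,
            Finset.univ_unique, Finset.sum_singleton]
          simp [Fin.succ_ne_zero, Finset.sum_ite_eq, Finset.sum_ite_eq']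
    have h0 : w ⬝ᵥ ((Tmat c f)ᵀ * quadMat (P₁ - P₂) (b₁ - b₂) (e₁ - e₂) * Tmat c f) *ᵥ w = 0 := by
      rw [h15]; simp
    rw [← Matrix.mulVec_mulVec, ← Matrix.mulVec_mulVec, Matrix.dotProduct_mulVec,
      Matrix.vecMul_transpose, hz] at h0
    set D := P₁ - P₂
    have hexp : Sum.elim x (fun _ => (1:ℝ)) ⬝ᵥ
        quadMat D (b₁ - b₂) (e₁ - e₂) *ᵥ Sum.elim x (fun _ => (1:ℝ)) =
        x ⬝ᵥ D *ᵥ x + 2 * ((b₁ - b₂) ⬝ᵥ x) + (e₁ - e₂) := by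
      have h1 : (Matrix.of fun i (_ : Unit) => (b₁ - b₂) i) *ᵥ (fun _ => (1:ℝ)) = b₁ - b₂ := by
        funext i; simp [mulVec, dotProduct]
      have h2 : (fun _ : Unit => (1:ℝ)) ⬝ᵥ
          ((Matrix.of fun (_ : Unit) j => (b₁ - b₂) j) *ᵥ x
            + (Matrix.of fun (_ : Unit) (_ : Unit) => e₁ - e₂) *ᵥ (fun _ => (1:ℝ)))
          = (b₁ - b₂) ⬝ᵥ x + (e₁ - e₂) := by
        simp [mulVec, dotProduct]
      simp only [quadMat, Matrix.fromBlocks_mulVec, sumElim_dotProduct_sumElim,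
        Sum.elim_comp_inl, Sum.elim_comp_inr, h1, h2, dotProduct_add]
      rw [dotProduct_comm x (b₁ - b₂)]
      ring
    rw [hexp] at h0
    have hD : x ⬝ᵥ D *ᵥ x = x ⬝ᵥ P₁ *ᵥ x - x ⬝ᵥ P₂ *ᵥ x := by
      simp [D, Matrix.sub_mulVec, dotProduct_sub]
    have hbd : (b₁ - b₂) ⬝ᵥ x = b₁ ⬝ᵥ x - b₂ ⬝ᵥ x := by
      simp [sub_dotProduct]
    rw [hD, hbd] at h0
    linarith
  -- conclude continuity via Continuous.if_le
  have hVeq : V = fun x => if (fun _ : Fin (n+1) → ℝ => (0:ℝ)) x ≤ (fun x => c ⬝ᵥ x + f) x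
      then x ⬝ᵥ P₂ *ᵥ x + 2 * (b₂ ⬝ᵥ x) + e₂ else x ⬝ᵥ P₁ *ᵥ x + 2 * (b₁ ⬝ᵥ x) + e₁ := by
    funext x
    rw [hV x]
    rcases lt_or_ge (c ⬝ᵥ x + f) 0 with h | h
    · rw [if_pos h, if_neg (not_le.mpr h)]
    · rw [if_neg (not_lt.mpr h), if_pos h]
  rw [hVeq]
  exact Continuous.if_le (hquad P₂ b₂ e₂) (hquad P₁ b₁ e₁) continuous_const hg
    (fun x hfx => (key x hfx.symm).symm)
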